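/- (Fault-probability lemma.) Let (Ω, P) be a probability space, U a finite type, V a linear order, and h : Ω → (U → V) a random hash function. Fix a finite set A ⊆ U with |A| ≥ ℓ (ℓ ≥ 1 a natural number), a real ε ≥ 0, and any subset C ⊂ A. For ω ∈ Ω let f_ω : U → V × U be the injective map x ↦ (h(ω)(x), x), with V × U ordered lexicographically. Assume that for every X ⊆ A with |X| = ℓ, P{ω : ∀ x ∈ X, ∀ y ∈ A \ X, f_ω(x) < f_ω(y)} ≤ (1+ε) / C(|A|, ℓ). Then the probability of the event F = {ω : Smallest(f_ω(A), ℓ) ⊆ f_ω(C)} satisfies P(F) ≤ (1+ε) · (|C| / |A|)^ℓ. -/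
import Mathlib


open MeasureTheory

/-- `Smallest S r` is the set of the `r` smallest elements of the finite set `S`
(in a linear order); if `|S| ≤ r` it is `S` itself. -/
def Smallest {L : Type*} [LinearOrder L] (S : Finset L) (r : ℕ) : Finset L :=
  ((S.sort (· ≤ ·)).take r).toFinset

lemma Smallest_subset {L : Type*} [LinearOrder L] (S : Finset L) (r : ℕ) :
    Smallest S r ⊆ S := by
  intro a ha
  rw [Smallest, List.mem_toFinset] at ha
  have := List.mem_of_mem_take ha
  rwa [Finset.mem_sort] at this

lemma card_Smallest {L : Type*} [LinearOrder L] (S : Finset L) (r : ℕ) (hr : r ≤ S.card) :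
    (Smallest S r).card = r := by
  rw [Smallest, List.toFinset_card_of_nodup ((S.sort_nodup (· ≤ ·)).take),
    List.length_take, Finset.length_sort]
  omega

lemma lt_of_mem_Smallest {L : Type*} [LinearOrder L] {S : Finset L} {r : ℕ} {a b : L}
    (ha : a ∈ Smallest S r) (hb : b ∈ S) (hb' : b ∉ Smallest S r) : a < b := by
  set s := S.sort (· ≤ ·) with hs
  rw [Smallest, List.mem_toFinset] at ha hb'
  have hbmem : b ∈ s := by rwa [Finset.mem_sort]
  have hbd : b ∈ s.drop r := by
    rcases (List.mem_append.1 (by rwa [List.take_append_drop] : b ∈ s.take r ++ s.drop r)) with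
      h | h
    · exact absurd h hb'
    · exact h
  have hsorted : (s.take r ++ s.drop r).Pairwise (· ≤ ·) := by
    rw [List.take_append_drop]; exact S.pairwise_sort (· ≤ ·)
  have hle : a ≤ b := (List.pairwise_append.1 hsorted).2.2 a ha b hbd
  have hnd : (s.take r ++ s.drop r).Nodup := by
    rw [List.take_append_drop]; exact S.sort_nodup (· ≤ ·)
  have hne : a ≠ b := by
    intro he
    exact (List.disjoint_of_nodup_append hnd) ha (he ▸ hbd)
  exact lt_of_le_of_ne hle hne

lemma choose_mul_pow_le (c a ℓ : ℕ) (h : c ≤ a) :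
    c.choose ℓ * a ^ ℓ ≤ a.choose ℓ * c ^ ℓ := by
  rcases lt_or_ge c ℓ with hl | hl
  · rw [Nat.choose_eq_zero_of_lt hl, zero_mul]; exact Nat.zero_le _
  · have key : c.descFactorial ℓ * a ^ ℓ ≤ a.descFactorial ℓ * c ^ ℓ := by
      rw [Nat.descFactorial_eq_prod_range, Nat.descFactorial_eq_prod_range]
      calc (∏ i ∈ Finset.range ℓ, (c - i)) * a ^ ℓ
          = ∏ i ∈ Finset.range ℓ, (c - i) * a := by
            rw [Finset.prod_mul_distrib, Finset.prod_const, Finset.card_range]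
        _ ≤ ∏ i ∈ Finset.range ℓ, (a - i) * c := by
            apply Finset.prod_le_prod' -- nat version?
            intro i hi
            rw [Finset.mem_range] at hi
            have hic : i ≤ c := le_of_lt (lt_of_lt_of_le hi hl)
            rw [Nat.sub_mul, Nat.sub_mul, mul_comm c a]
            exact Nat.sub_le_sub_left (Nat.mul_le_mul_left i h) _
        _ = (∏ i ∈ Finset.range ℓ, (a - i)) * c ^ ℓ := by
            rw [Finset.prod_mul_distrib, Finset.prod_const, Finset.card_range]
    have h2 : Nat.factorial ℓ * (c.choose ℓ * a ^ ℓ) ≤ Nat.factorial ℓ * (a.choose ℓ * c ^ ℓ) := by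
      calc Nat.factorial ℓ * (c.choose ℓ * a ^ ℓ) = c.descFactorial ℓ * a ^ ℓ := by
            rw [Nat.descFactorial_eq_factorial_mul_choose, mul_assoc]
        _ ≤ a.descFactorial ℓ * c ^ ℓ := key
        _ = Nat.factorial ℓ * (a.choose ℓ * c ^ ℓ) := by
            rw [Nat.descFactorial_eq_factorial_mul_choose, mul_assoc]
    exact Nat.le_of_mul_le_mul_left h2 (Nat.factorial_pos ℓ)

/-- **Fault-probability lemma.**  Let `h : Ω → (U → V)` be a random hash function,
`A ⊆ U` finite with `|A| ≥ ℓ ≥ 1`, `ε ≥ 0`, and `C ⊂ A`.  Write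
`f_ω x = (h ω x, x) ∈ V ×ₗ U` (lexicographic order).  If for every `X ⊆ A` with
`|X| = ℓ` the probability that all of `f_ω(X)` lies strictly below all of
`f_ω(A \ X)` is at most `(1+ε)/C(|A|,ℓ)`, then the probability of the fault event
`F = {Smallest(f_ω(A), ℓ) ⊆ f_ω(C)}` is at most `(1+ε)·(|C|/|A|)^ℓ`. -/
theorem fault_probability {Ω U V : Type*} [MeasurableSpace Ω]
    (P : Measure Ω) [IsProbabilityMeasure P]
    [Fintype U] [LinearOrder U] [LinearOrder V]
    (h : Ω → U → V) (A : Finset U) (ℓ : ℕ) (hℓ : 1 ≤ ℓ) (hℓA : ℓ ≤ A.card)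
    (ε : ℝ) (hε : 0 ≤ ε) (C : Finset U) (hC : C ⊂ A)
    (hmin : ∀ X ⊆ A, X.card = ℓ →
      P {ω | ∀ x ∈ X, ∀ y ∈ A \ X, toLex (h ω x, x) < toLex (h ω y, y)}
        ≤ ENNReal.ofReal ((1 + ε) / (A.card.choose ℓ : ℝ))) :
    P {ω | Smallest (A.image fun x => toLex (h ω x, x)) ℓ ⊆
          C.image fun x => toLex (h ω x, x)}
      ≤ ENNReal.ofReal ((1 + ε) * ((C.card : ℝ) / (A.card : ℝ)) ^ ℓ) := by
  classical
  set E : Finset U → Set Ω := fun X =>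
    {ω | ∀ x ∈ X, ∀ y ∈ A \ X, toLex (h ω x, x) < toLex (h ω y, y)} with hE
  have hCA : C ⊆ A := hC.subset
  -- covering
  have hcover : {ω | Smallest (A.image fun x => toLex (h ω x, x)) ℓ ⊆
          C.image fun x => toLex (h ω x, x)} ⊆ ⋃ X ∈ C.powersetCard ℓ, E X := by
    intro ω hω
    simp only [Set.mem_setOf_eq] at hω
    set f : U → Lex (V × U) := fun x => toLex (h ω x, x) with hf
    have hinj : Function.Injective f := by
      intro a b hab
      have := congrArg (fun p => (ofLex p).2) hab
      simpa [hf] using this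
    set T : Finset (Lex (V × U)) := Smallest (A.image f) ℓ with hT
    set X : Finset U := A.filter (fun x => f x ∈ T) with hX
    have hTsub : T ⊆ A.image f := Smallest_subset _ _
    have hTcard : T.card = ℓ := by
      apply card_Smallest
      rwa [Finset.card_image_of_injective _ hinj]
    have hXim : X.image f = T := by
      apply Finset.Subset.antisymm
      · intro t ht
        rcases Finset.mem_image.1 ht with ⟨x, hx, rfl⟩
        exact (Finset.mem_filter.1 hx).2
      · intro t ht
        rcases Finset.mem_image.1 (hTsub ht) with ⟨x, hx, rfl⟩
        exact Finset.mem_image_of_mem f (Finset.mem_filter.2 ⟨hx, ht⟩)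
    have hXcard : X.card = ℓ := by
      rw [← Finset.card_image_of_injective X hinj, hXim, hTcard]
    have hXC : X ⊆ C := by
      intro x hx
      have hfx : f x ∈ T := (Finset.mem_filter.1 hx).2
      have : f x ∈ C.image f := hω hfx
      rcases Finset.mem_image.1 this with ⟨c, hc, hcx⟩
      exact (hinj hcx) ▸ hc
    refine Set.mem_biUnion (Finset.mem_powersetCard.2 ⟨hXC, hXcard⟩) ?_
    intro x hx y hy
    have hfx : f x ∈ T := (Finset.mem_filter.1 hx).2
    rcases Finset.mem_sdiff.1 hy with ⟨hyA, hyX⟩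
    have hfy : f y ∈ A.image f := Finset.mem_image_of_mem f hyA
    have hfy' : f y ∉ T := fun hmem => hyX (Finset.mem_filter.2 ⟨hyA, hmem⟩)
    exact lt_of_mem_Smallest hfx hfy hfy'
  have hbound : ∀ X ∈ C.powersetCard ℓ,
      P (E X) ≤ ENNReal.ofReal ((1 + ε) / (A.card.choose ℓ : ℝ)) := by
    intro X hXm
    obtain ⟨hXC, hXcard⟩ := Finset.mem_powersetCard.1 hXm
    exact hmin X (hXC.trans hCA) hXcard
  have hA0 : 0 < A.card := lt_of_lt_of_le hℓ hℓA
  have hchA : 0 < A.card.choose ℓ := Nat.choose_pos hℓA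
  have hfinal : (C.card.choose ℓ : ℝ) * ((1 + ε) / (A.card.choose ℓ : ℝ))
      ≤ (1 + ε) * ((C.card : ℝ) / (A.card : ℝ)) ^ ℓ := by
    have hratio : (C.card.choose ℓ : ℝ) / (A.card.choose ℓ : ℝ)
        ≤ ((C.card : ℝ) / (A.card : ℝ)) ^ ℓ := by
      rw [div_pow, div_le_div_iff₀ (by exact_mod_cast hchA)
        (pow_pos (by exact_mod_cast hA0) ℓ)]
      have := choose_mul_pow_le C.card A.card ℓ (Finset.card_le_card hCA)
      calc (C.card.choose ℓ : ℝ) * (A.card : ℝ) ^ ℓ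
          = ((C.card.choose ℓ * A.card ^ ℓ : ℕ) : ℝ) := by push_cast; ring
        _ ≤ ((A.card.choose ℓ * C.card ^ ℓ : ℕ) : ℝ) := by exact_mod_cast this
        _ = (C.card : ℝ) ^ ℓ * (A.card.choose ℓ : ℝ) := by push_cast; ring
    calc (C.card.choose ℓ : ℝ) * ((1 + ε) / (A.card.choose ℓ : ℝ))
        = (1 + ε) * ((C.card.choose ℓ : ℝ) / (A.card.choose ℓ : ℝ)) := by ring
      _ ≤ (1 + ε) * ((C.card : ℝ) / (A.card : ℝ)) ^ ℓ := by
          apply mul_le_mul_of_nonneg_left hratio (by linarith)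
  calc P {ω | Smallest (A.image fun x => toLex (h ω x, x)) ℓ ⊆
          C.image fun x => toLex (h ω x, x)}
      ≤ P (⋃ X ∈ C.powersetCard ℓ, E X) := measure_mono hcover
    _ ≤ ∑ X ∈ C.powersetCard ℓ, P (E X) := measure_biUnion_finset_le _ _
    _ ≤ ∑ _X ∈ C.powersetCard ℓ, ENNReal.ofReal ((1 + ε) / (A.card.choose ℓ : ℝ)) :=
        Finset.sum_le_sum hbound
    _ = (C.card.choose ℓ : ℕ) • ENNReal.ofReal ((1 + ε) / (A.card.choose ℓ : ℝ)) := by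
        rw [Finset.sum_const, Finset.card_powersetCard]
    _ = ENNReal.ofReal ((C.card.choose ℓ : ℝ) * ((1 + ε) / (A.card.choose ℓ : ℝ))) := by
        rw [nsmul_eq_mul, ← ENNReal.ofReal_natCast (C.card.choose ℓ),
          ← ENNReal.ofReal_mul (by positivity)]
    _ ≤ ENNReal.ofReal ((1 + ε) * ((C.card : ℝ) / (A.card : ℝ)) ^ ℓ) :=
        ENNReal.ofReal_le_ofReal hfinal
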